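/- Under the (A,B) signGD dynamics, there exists t ∈ ℕ such that |A(t')| ≤ σ₀²·η for all t' ≥ t. -/
import Mathlib


/-- The frequency-domain `(A,B)` signGD error dynamics with `a = σ₀²η`, `b = σ₁²η`:
`A(t+1) = A(t) − (a/3)(sgn(A+B) + sgn(A) + sgn(A−B))` and
`B(t+1) = B(t) − (b/2)(sgn(A+B) − sgn(A−B))`. -/
def SignGDDyn (σ0sq σ1sq η : ℝ) (A B : ℕ → ℝ) : Prop :=
  (∀ t, A (t+1) = A t - σ0sq * η / 3 *
      (Real.sign (A t + B t) + Real.sign (A t) + Real.sign (A t - B t))) ∧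
  (∀ t, B (t+1) = B t - σ1sq * η / 2 *
      (Real.sign (A t + B t) - Real.sign (A t - B t)))

lemma sign_mem (x : ℝ) : -1 ≤ Real.sign x ∧ Real.sign x ≤ 1 := by
  rcases lt_trichotomy x 0 with h | h | h
  · rw [Real.sign_of_neg h]; norm_num
  · rw [h, Real.sign_zero]; norm_num
  · rw [Real.sign_of_pos h]; norm_num

/-- Under the `(A,B)` signGD dynamics, eventually `|A(t')| ≤ σ₀²η` forever. -/
theorem signGD_A_eventually_bounded (σ0sq σ1sq η : ℝ)
    (h0 : 0 < σ0sq) (h1 : 0 < σ1sq) (hη : 0 < η)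
    (A B : ℕ → ℝ) (hdyn : SignGDDyn σ0sq σ1sq η A B) :
    ∃ t : ℕ, ∀ t' ≥ t, |A t'| ≤ σ0sq * η := by
  obtain ⟨hA, hB⟩ := hdyn
  set a : ℝ := σ0sq * η with ha_def
  have ha : 0 < a := mul_pos h0 hη
  -- sum of signs
  set S : ℕ → ℝ := fun t =>
    Real.sign (A t + B t) + Real.sign (A t) + Real.sign (A t - B t) with hS_def
  have hstep : ∀ t, A (t+1) = A t - a / 3 * S t := by
    intro t; rw [hA t]
  have hSpos : ∀ t, 0 < A t → 1 ≤ S t ∧ S t ≤ 3 := by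
    intro t ht
    have h2 : Real.sign (A t) = 1 := Real.sign_of_pos ht
    have b1 := sign_mem (A t + B t)
    have b3 := sign_mem (A t - B t)
    rcases lt_or_ge 0 (A t - B t) with h | h
    · have h3 : Real.sign (A t - B t) = 1 := Real.sign_of_pos h
      constructor <;> (simp only [hS_def, h2, h3]; linarith [b1.1, b1.2])
    · have hp : 0 < A t + B t := by linarith
      have h1' : Real.sign (A t + B t) = 1 := Real.sign_of_pos hp
      constructor <;> (simp only [hS_def, h2, h1']; linarith [b3.1, b3.2])
  have hSneg : ∀ t, A t < 0 → -3 ≤ S t ∧ S t ≤ -1 := by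
    intro t ht
    have h2 : Real.sign (A t) = -1 := Real.sign_of_neg ht
    have b1 := sign_mem (A t + B t)
    have b3 := sign_mem (A t - B t)
    rcases lt_or_ge (A t - B t) 0 with h | h
    · have h3 : Real.sign (A t - B t) = -1 := Real.sign_of_neg h
      constructor <;> (simp only [hS_def, h2, h3]; linarith [b1.1, b1.2])
    · have hp : A t + B t < 0 := by linarith
      have h1' : Real.sign (A t + B t) = -1 := Real.sign_of_neg hp
      constructor <;> (simp only [hS_def, h2, h1']; linarith [b3.1, b3.2])
  have hSzero : ∀ t, A t = 0 → S t = 0 := by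
    intro t ht
    have h2 : Real.sign (A t) = 0 := by rw [ht, Real.sign_zero]
    have e1 : A t + B t = B t := by rw [ht]; ring
    have e3 : A t - B t = -(B t) := by rw [ht]; ring
    rcases lt_trichotomy (B t) 0 with h | h | h
    · have := Real.sign_of_neg h
      have h3 : Real.sign (A t - B t) = 1 := by
        rw [e3]; exact Real.sign_of_pos (by linarith)
      simp only [hS_def, e1, h2, h3, this]; ring
    · simp [hS_def, e1, e3, h, ht, Real.sign_zero]
    · have := Real.sign_of_pos h
      have h3 : Real.sign (A t - B t) = -1 := by
        rw [e3]; exact Real.sign_of_neg (by linarith)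
      simp only [hS_def, e1, h2, h3, this]; ring
  -- one-step bounds
  have pos_step : ∀ t, 0 < A t → A t - a ≤ A (t+1) ∧ A (t+1) ≤ A t - a / 3 := by
    intro t ht
    obtain ⟨hl, hu⟩ := hSpos t ht
    have h3 : (0:ℝ) ≤ a / 3 := by linarith
    have u := mul_le_mul_of_nonneg_left hu h3
    have l := mul_le_mul_of_nonneg_left hl h3
    rw [hstep t]
    constructor
    · linarith [show a / 3 * 3 = a from by ring]
    · linarith [show a / 3 * 1 = a / 3 from by ring]
  have neg_step : ∀ t, A t < 0 → A t + a / 3 ≤ A (t+1) ∧ A (t+1) ≤ A t + a := by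
    intro t ht
    obtain ⟨hl, hu⟩ := hSneg t ht
    have h3 : (0:ℝ) ≤ a / 3 := by linarith
    have u := mul_le_mul_of_nonneg_left hu h3
    have l := mul_le_mul_of_nonneg_left hl h3
    rw [hstep t]
    constructor
    · linarith [show a / 3 * (-1) = -(a / 3) from by ring]
    · linarith [show a / 3 * (-3) = -a from by ring]
  have zero_step : ∀ t, A t = 0 → A (t+1) = 0 := by
    intro t ht
    rw [hstep t, hSzero t ht, ht]; ring
  -- invariant
  have inv : ∀ t, |A t| ≤ a → |A (t+1)| ≤ a := by
    intro t ht
    rw [abs_le] at ht ⊢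
    rcases lt_trichotomy (A t) 0 with h | h | h
    · obtain ⟨hl, hu⟩ := neg_step t h
      constructor <;> linarith
    · rw [zero_step t h]; constructor <;> linarith
    · obtain ⟨hl, hu⟩ := pos_step t h
      constructor <;> linarith
  -- decrease
  have dec : ∀ t, a < |A t| → |A (t+1)| ≤ |A t| - a / 3 := by
    intro t ht
    rcases lt_trichotomy (A t) 0 with h | h | h
    · obtain ⟨hl, hu⟩ := neg_step t h
      rw [abs_of_neg h] at ht ⊢
      have : A (t+1) < 0 := by linarith
      rw [abs_of_neg this]; linarith
    · rw [h, abs_zero] at ht; linarith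
    · obtain ⟨hl, hu⟩ := pos_step t h
      rw [abs_of_pos h] at ht ⊢
      have : 0 < A (t+1) := by linarith
      rw [abs_of_pos this]; linarith
  -- key bound by induction
  have key : ∀ n : ℕ, |A n| ≤ max a (|A 0| - n * (a / 3)) := by
    intro n
    induction n with
    | zero => simpa using le_max_right a (|A 0|)
    | succ n ih =>
      rcases le_or_gt (|A n|) a with h | h
      · exact le_trans (inv n h) (le_max_left _ _)
      · have hmax : |A 0| - n * (a / 3) ≥ |A n| := by
          rcases le_or_gt (|A 0| - n * (a / 3)) a with hc | hc
          · rw [max_eq_left hc] at ih; linarith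
          · rw [max_eq_right hc.le] at ih; linarith
        have hd := dec n h
        refine le_trans ?_ (le_max_right a (|A 0| - (n+1 : ℕ) * (a / 3)))
        push_cast
        linarith
  -- choose n large
  obtain ⟨n, hn⟩ := exists_nat_ge (|A 0| / (a / 3))
  have hn' : |A 0| - n * (a / 3) ≤ a := by
    have h3 : (0:ℝ) < a / 3 := by linarith
    have := (div_le_iff₀ h3).mp hn
    linarith
  refine ⟨n, fun t' ht' => ?_⟩
  induction t', ht' using Nat.le_induction with
  | base =>
    have := key n
    rw [max_eq_left hn'] at this
    exact this
  | succ m hm ih => exact inv m ih
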